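/- For an integer k ≥ 1, define ξ_k : [0, ∞) → [1, ∞) as the inverse of the strictly increasing function ξ ↦ ξ^k − ξ^{k−1} on [1, ∞). Then ξ_k(t) ≥ t^{1/k} for all t ≥ 0, ξ_k(t) − t^{1/k} → 1/k as t → +∞, and log(ξ_k(t)/t^{1/k}) is asymptotically equivalent to (1/k)·t^{−1/k} as t → +∞. -/

import Mathlib

open Filter

/-- for an integer `k ≥ 1`, let `ξ : [0,∞) → [1,∞)` be the inverse of
`ξ ↦ ξ^k − ξ^{k−1}` on `[1,∞)`.  Then `ξ(t) ≥ t^{1/k}` for all `t ≥ 0`,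
`ξ(t) − t^{1/k} → 1/k` as `t → +∞`, and
`log(ξ(t)/t^{1/k}) ∼ (1/k)·t^{−1/k}` as `t → +∞`. -/
theorem stmt2 (k : ℕ) (hk : 1 ≤ k) (ξ : ℝ → ℝ)
    (hξ : ∀ t : ℝ, 0 ≤ t → 1 ≤ ξ t ∧ ξ t ^ k - ξ t ^ (k - 1) = t) :
    (∀ t : ℝ, 0 ≤ t → t ^ ((1 : ℝ) / k) ≤ ξ t) ∧
    Tendsto (fun t : ℝ => ξ t - t ^ ((1 : ℝ) / k)) atTop (nhds (1 / (k : ℝ))) ∧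
    Tendsto (fun t : ℝ =>
        Real.log (ξ t / t ^ ((1 : ℝ) / k)) / ((1 / (k : ℝ)) * t ^ (-(1 : ℝ) / k)))
      atTop (nhds 1) := by
  have hk0 : (0:ℝ) < (k:ℝ) := by exact_mod_cast Nat.pos_of_ne_zero (by omega)
  set c : ℝ := 1 / (k:ℝ) with hc_def
  have hc : 0 < c := by positivity
  -- key algebraic identity: t^c = ξ t * (1 - 1/ξ t)^c for t ≥ 0
  have key : ∀ t : ℝ, 0 ≤ t → t ^ c = ξ t * (1 - 1 / ξ t) ^ c := by
    intro t ht
    obtain ⟨h1, h2⟩ := hξ t ht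
    have hx0 : (0:ℝ) < ξ t := lt_of_lt_of_le one_pos h1
    have hpow : ξ t ^ (k - 1) * ξ t = ξ t ^ k := by
      rw [← pow_succ]; congr 1; omega
    have ht' : t = ξ t ^ k * (1 - 1 / ξ t) := by
      have : ξ t ^ k * (1 - 1 / ξ t) = ξ t ^ k - ξ t ^ (k - 1) := by
        field_simp
        nlinarith [hpow]
      rw [this, h2]
    have hu1 : 1 / ξ t ≤ 1 := by
      rw [div_le_one hx0]; exact h1
    have h1u : 0 ≤ 1 - 1 / ξ t := by linarith
    have hbk : (0:ℝ) ≤ ξ t ^ k := by positivity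
    conv_lhs => rw [ht']
    rw [Real.mul_rpow hbk h1u]
    congr 1
    rw [← Real.rpow_natCast (ξ t) k, ← Real.rpow_mul hx0.le]
    rw [hc_def]
    rw [mul_one_div, div_self (ne_of_gt hk0), Real.rpow_one]
  -- part 1
  have part1 : ∀ t : ℝ, 0 ≤ t → t ^ c ≤ ξ t := by
    intro t ht
    obtain ⟨h1, _⟩ := hξ t ht
    have hx0 : (0:ℝ) < ξ t := lt_of_lt_of_le one_pos h1
    have hu1 : 1 / ξ t ≤ 1 := by rw [div_le_one hx0]; exact h1
    have h1u : 0 ≤ 1 - 1 / ξ t := by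
      have : 0 < 1 / ξ t := by positivity
      linarith
    rw [key t ht]
    calc ξ t * (1 - 1 / ξ t) ^ c ≤ ξ t * 1 := by
          gcongr
          exact Real.rpow_le_one h1u (by linarith [one_div_pos.mpr hx0]) hc.le
      _ = ξ t := mul_one _
  -- ξ tends to infinity
  have hξtop : Tendsto ξ atTop atTop := by
    refine tendsto_atTop_mono' atTop ?_ (tendsto_rpow_atTop hc)
    filter_upwards [eventually_ge_atTop (0:ℝ)] with t ht
    exact part1 t ht
  -- u = 1/ξ tends to 0 within (0, ∞)
  have hu : Tendsto (fun t => 1 / ξ t) atTop (nhdsWithin 0 (Set.Ioi 0)) := by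
    rw [tendsto_nhdsWithin_iff]
    constructor
    · exact (tendsto_inv_atTop_zero.comp hξtop).congr (fun t => by simp [one_div])
    · filter_upwards [eventually_ge_atTop (0:ℝ)] with t ht
      have h1 := (hξ t ht).1
      have : (0:ℝ) < ξ t := lt_of_lt_of_le one_pos h1
      exact one_div_pos.mpr this
  -- derivative lemma A
  have hd1 : HasDerivAt (fun u : ℝ => 1 - (1 - u) ^ c) c 0 := by
    have hinner : HasDerivAt (fun u : ℝ => 1 - u) (-1) 0 := (hasDerivAt_id 0).const_sub 1
    have houter : HasDerivAt (fun y : ℝ => y ^ c) (c * (1:ℝ) ^ (c - 1)) ((fun u : ℝ => 1 - u) 0) := by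
      simpa using Real.hasDerivAt_rpow_const (x := (1:ℝ)) (p := c) (Or.inl one_ne_zero)
    have h3 := (houter.comp 0 hinner).const_sub 1
    exact h3.congr_deriv (by simp)
  have hA : Tendsto (fun u : ℝ => (1 - (1 - u) ^ c) / u) (nhdsWithin 0 (Set.Ioi 0)) (nhds c) := by
    have hslope := hasDerivAt_iff_tendsto_slope.mp hd1
    have hmono : nhdsWithin (0:ℝ) (Set.Ioi 0) ≤ nhdsWithin 0 {0}ᶜ :=
      nhdsWithin_mono _ (fun x hx => ne_of_gt hx)
    refine Tendsto.congr (fun x => ?_) (hslope.mono_left hmono)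
    simp [slope_def_field, Real.one_rpow]
  -- derivative lemma B
  have hd2 : HasDerivAt (fun u : ℝ => -Real.log (1 - u)) 1 0 := by
    have hinner : HasDerivAt (fun u : ℝ => 1 - u) (-1) 0 := (hasDerivAt_id 0).const_sub 1
    have houter : HasDerivAt Real.log (1:ℝ)⁻¹ ((fun u : ℝ => 1 - u) 0) := by
      simpa using Real.hasDerivAt_log (one_ne_zero)
    have h3 := (houter.comp 0 hinner).neg
    exact h3.congr_deriv (by simp)
  have hBslope : Tendsto (fun u : ℝ => (-Real.log (1 - u)) / u) (nhdsWithin 0 (Set.Ioi 0)) (nhds 1) := by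
    have hslope := hasDerivAt_iff_tendsto_slope.mp hd2
    have hmono : nhdsWithin (0:ℝ) (Set.Ioi 0) ≤ nhdsWithin 0 {0}ᶜ :=
      nhdsWithin_mono _ (fun x hx => ne_of_gt hx)
    refine Tendsto.congr (fun x => ?_) (hslope.mono_left hmono)
    simp [slope_def_field]
  have hcont : Tendsto (fun u : ℝ => (1 - u) ^ c) (nhdsWithin 0 (Set.Ioi 0)) (nhds 1) := by
    have : ContinuousAt (fun u : ℝ => (1 - u) ^ c) 0 := by
      have h1 : ContinuousAt (fun y : ℝ => y ^ c) ((1:ℝ) - 0) :=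
        Real.continuousAt_rpow_const _ _ (Or.inl (by norm_num))
      exact h1.comp (continuousAt_const.sub continuousAt_id)
    have h3 := this.tendsto.mono_left (nhdsWithin_le_nhds (s := Set.Ioi (0:ℝ)))
    simpa using h3
  have hB : Tendsto (fun u : ℝ => (-Real.log (1 - u)) * (1 - u) ^ c / u)
      (nhdsWithin 0 (Set.Ioi 0)) (nhds 1) := by
    have := hBslope.mul hcont
    simp only [one_mul] at this
    refine this.congr (fun x => ?_)
    ring
  refine ⟨part1, ?_, ?_⟩
  · -- part 2
    have hcomp := hA.comp hu
    refine hcomp.congr' ?_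
    filter_upwards [eventually_ge_atTop (0:ℝ)] with t ht
    obtain ⟨h1, _⟩ := hξ t ht
    have hx0 : (0:ℝ) < ξ t := lt_of_lt_of_le one_pos h1
    simp only [Function.comp_apply]
    rw [key t ht]
    field_simp
  · -- part 3
    have hcomp := hB.comp hu
    refine hcomp.congr' ?_
    filter_upwards [eventually_ge_atTop (1:ℝ)] with t ht1
    have ht : (0:ℝ) ≤ t := by linarith
    obtain ⟨h1, h2⟩ := hξ t ht
    have hx1 : 1 < ξ t := by
      rcases lt_or_eq_of_le h1 with h | h
      · exact h
      · exfalso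
        rw [← h] at h2
        simp at h2
        linarith
    have hx0 : (0:ℝ) < ξ t := by linarith
    have hu0 : 0 < 1 / ξ t := by positivity
    have hu1 : 1 / ξ t < 1 := by rw [div_lt_one hx0]; exact hx1
    have h1u : 0 < 1 - 1 / ξ t := by linarith
    have htc : t ^ c = ξ t * (1 - 1 / ξ t) ^ c := key t ht
    have hrc : (0:ℝ) < (1 - 1 / ξ t) ^ c := Real.rpow_pos_of_pos h1u c
    simp only [Function.comp_apply]
    have e1 : ξ t / t ^ c = ((1 - 1 / ξ t) ^ c)⁻¹ := by
      rw [htc, ← div_div, div_self hx0.ne', one_div]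
    have e2 : Real.log (ξ t / t ^ c) = c * (-Real.log (1 - 1 / ξ t)) := by
      rw [e1, Real.log_inv, Real.log_rpow h1u]
      ring
    have e3 : t ^ (-(1:ℝ) / (k:ℝ)) = (1 / ξ t) * ((1 - 1 / ξ t) ^ c)⁻¹ := by
      have hneg : (-(1:ℝ) / (k:ℝ)) = -c := by rw [hc_def]; ring
      rw [hneg, Real.rpow_neg ht, htc, mul_inv, one_div]
    rw [e2, e3]
    field_simp
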